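/- Conversely, if b < -a* (with a* the optimal 2D Gagliardo–Nirenberg constant), then the functional u ↦ ∫|∇u|² + (b/2)∫|u|⁴ is unbounded below on the unit L²-sphere of H^1(ℝ²). -/

import Mathlib

open MeasureTheory
noncomputable section

abbrev E2 := EuclideanSpace ℝ (Fin 2)

def InH1 (u : E2 → ℂ) : Prop :=
  Differentiable ℝ u ∧ MemLp u 2 volume ∧ MemLp (fun x => fderiv ℝ u x) 2 volume

def IsGNOptimal (astar : ℝ) : Prop :=
  0 < astar ∧
    IsGreatest {a : ℝ | ∀ u : E2 → ℂ, InH1 u →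
      (∫ x, ‖u x‖ ^ 2) * (∫ x, ‖fderiv ℝ u x‖ ^ 2) ≥ a / 2 * ∫ x, ‖u x‖ ^ 4}
      astar

lemma fderiv_scale (u : E2 → ℂ) (hu : Differentiable ℝ u) (t l : ℝ) (x : E2) :
    fderiv ℝ (fun y => (t : ℂ) • u (l • y)) x
      = (t * l) • fderiv ℝ u (l • x) := by
  have hL : HasFDerivAt (fun y : E2 => l • y)
      (l • ContinuousLinearMap.id ℝ E2) x := (hasFDerivAt_id x).const_smul l
  have hcomp : HasFDerivAt (fun y : E2 => u (l • y))
      ((fderiv ℝ u (l • x)).comp (l • ContinuousLinearMap.id ℝ E2)) x :=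
    (hu (l • x)).hasFDerivAt.comp x hL
  have hsm := hcomp.const_smul (t : ℂ)
  have h2 : (t : ℂ) • (fderiv ℝ u (l • x)).comp (l • ContinuousLinearMap.id ℝ E2)
      = (t * l) • fderiv ℝ u (l • x) := by
    ext z
    simp only [ContinuousLinearMap.smul_apply, ContinuousLinearMap.coe_comp',
      Function.comp_apply, ContinuousLinearMap.coe_id', id_eq,
      _root_.map_smul (fderiv ℝ u (l • x)) l z]
    simp only [smul_eq_mul, Complex.real_smul, Complex.ofReal_mul]
    ring
  rw [h2] at hsm
  exact hsm.fderiv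

lemma norm_fderiv_scale (u : E2 → ℂ) (hu : Differentiable ℝ u) {t l : ℝ}
    (ht : 0 < t) (hl : 0 < l) (x : E2) :
    ‖fderiv ℝ (fun y => (t : ℂ) • u (l • y)) x‖ = t * l * ‖fderiv ℝ u (l • x)‖ := by
  rw [fderiv_scale u hu t l x, norm_smul (t * l) (fderiv ℝ u (l • x)),
    Real.norm_eq_abs, abs_of_pos (mul_pos ht hl)]

lemma integral_scale (g : E2 → ℝ) {l : ℝ} (hl : 0 < l) :
    ∫ x, g (l • x) = (l ^ 2)⁻¹ * ∫ x, g x := by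
  have := Measure.integral_comp_smul_of_nonneg (μ := volume) g l (hR := hl.le)
  simpa [finrank_euclideanSpace_fin, smul_eq_mul] using this

/-- if `b < -a*` then `u ↦ ∫|∇u|² + (b/2)∫|u|⁴` is unbounded below
on the unit `L²`-sphere of `H¹(ℝ²)`. -/
theorem nls_unbounded_below (astar : ℝ) (hastar : IsGNOptimal astar)
    (b : ℝ) (hb : b < -astar) :
    ∀ C : ℝ, ∃ u : E2 → ℂ, InH1 u ∧ (∫ x, ‖u x‖ ^ 2) = 1 ∧
      (∫ x, ‖fderiv ℝ u x‖ ^ 2) + b / 2 * ∫ x, ‖u x‖ ^ 4 < C := by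
  intro C
  have hnot : ¬ (∀ u : E2 → ℂ, InH1 u →
      (∫ x, ‖u x‖ ^ 2) * (∫ x, ‖fderiv ℝ u x‖ ^ 2) ≥ (-b) / 2 * ∫ x, ‖u x‖ ^ 4) := by
    intro h
    exact absurd (hastar.2.2 h) (by linarith)
  push_neg at hnot
  obtain ⟨u, hu, hlt⟩ := hnot
  set M := ∫ x, ‖u x‖ ^ 2 with hMdef
  set K := ∫ x, ‖fderiv ℝ u x‖ ^ 2 with hKdef
  set P := ∫ x, ‖u x‖ ^ 4 with hPdef
  have hGN : M * K ≥ astar / 2 * P := hastar.2.1 u hu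
  have hM0 : 0 ≤ M := integral_nonneg fun x => by positivity
  have hK0 : 0 ≤ K := integral_nonneg fun x => by positivity
  have hP : 0 < P := by nlinarith [hastar.1]
  have hM : 0 < M := by nlinarith [hastar.1]
  have hE0 : M * K + b / 2 * P < 0 := by linarith
  have hneg : 0 < -(M * K + b / 2 * P) := by linarith
  set l : ℝ := max 1 (Real.sqrt ((M ^ 2 * (|C| + 1)) / (-(M * K + b / 2 * P)))) with hldef
  have hl : 0 < l := lt_of_lt_of_le one_pos (le_max_left _ _)
  have hl2 : M ^ 2 * (|C| + 1) / (-(M * K + b / 2 * P)) ≤ l ^ 2 := by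
    have h1 : 0 ≤ M ^ 2 * (|C| + 1) / (-(M * K + b / 2 * P)) :=
      div_nonneg (by positivity) hneg.le
    have h2 : Real.sqrt (M ^ 2 * (|C| + 1) / (-(M * K + b / 2 * P))) ≤ l :=
      le_max_right _ _
    calc M ^ 2 * (|C| + 1) / (-(M * K + b / 2 * P))
        = Real.sqrt (M ^ 2 * (|C| + 1) / (-(M * K + b / 2 * P))) ^ 2 :=
          (Real.sq_sqrt h1).symm
      _ ≤ l ^ 2 := by
          have := Real.sqrt_nonneg (M ^ 2 * (|C| + 1) / (-(M * K + b / 2 * P)))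
          nlinarith
  set t : ℝ := l / Real.sqrt M with htdef
  have hsM : 0 < Real.sqrt M := Real.sqrt_pos.2 hM
  have ht : 0 < t := div_pos hl hsM
  have ht2 : t ^ 2 = l ^ 2 / M := by
    rw [htdef, div_pow, Real.sq_sqrt hM.le]
  set v : E2 → ℂ := fun y => (t : ℂ) • u (l • y) with hvdef
  have hu2 : Integrable (fun x => ‖u x‖ ^ 2) :=
    (memLp_two_iff_integrable_sq_norm hu.2.1.1).1 hu.2.1
  have hdu2 : Integrable (fun x => ‖fderiv ℝ u x‖ ^ 2) :=
    (memLp_two_iff_integrable_sq_norm hu.2.2.1).1 hu.2.2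
  have hvnorm : ∀ x, ‖v x‖ = t * ‖u (l • x)‖ := by
    intro x
    rw [hvdef, norm_smul, Complex.norm_real, Real.norm_eq_abs, abs_of_pos ht]
  have hvd : ∀ x, ‖fderiv ℝ v x‖ = t * l * ‖fderiv ℝ u (l • x)‖ :=
    norm_fderiv_scale u hu.1 ht hl
  have hmass : (∫ x, ‖v x‖ ^ 2) = t ^ 2 * ((l ^ 2)⁻¹ * M) := by
    have e1 : (∫ x, ‖v x‖ ^ 2) = t ^ 2 * ∫ x, ‖u (l • x)‖ ^ 2 := by
      rw [← integral_const_mul]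
      congr 1; funext x; rw [hvnorm x]; ring
    have e2 : (∫ x, ‖u (l • x)‖ ^ 2) = (l ^ 2)⁻¹ * M :=
      integral_scale (fun y => ‖u y‖ ^ 2) hl
    rw [e1, e2]
  have hkin : (∫ x, ‖fderiv ℝ v x‖ ^ 2) = (t * l) ^ 2 * ((l ^ 2)⁻¹ * K) := by
    have e1 : (∫ x, ‖fderiv ℝ v x‖ ^ 2)
        = (t * l) ^ 2 * ∫ x, ‖fderiv ℝ u (l • x)‖ ^ 2 := by
      rw [← integral_const_mul]
      congr 1; funext x; rw [hvd x]; ring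
    have e2 : (∫ x, ‖fderiv ℝ u (l • x)‖ ^ 2) = (l ^ 2)⁻¹ * K :=
      integral_scale (fun y => ‖fderiv ℝ u y‖ ^ 2) hl
    rw [e1, e2]
  have hquart : (∫ x, ‖v x‖ ^ 4) = t ^ 4 * ((l ^ 2)⁻¹ * P) := by
    have e1 : (∫ x, ‖v x‖ ^ 4) = t ^ 4 * ∫ x, ‖u (l • x)‖ ^ 4 := by
      rw [← integral_const_mul]
      congr 1; funext x; rw [hvnorm x]; ring
    have e2 : (∫ x, ‖u (l • x)‖ ^ 4) = (l ^ 2)⁻¹ * P :=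
      integral_scale (fun y => ‖u y‖ ^ 4) hl
    rw [e1, e2]
  have hvdiff : Differentiable ℝ v :=
    (hu.1.comp (differentiable_id.const_smul l)).const_smul (t : ℂ)
  have hvmem : MemLp v 2 volume := by
    refine (memLp_two_iff_integrable_sq_norm
      hvdiff.continuous.aestronglyMeasurable).2 ?_
    have : (fun x => ‖v x‖ ^ 2) = fun x => t ^ 2 * ((fun y => ‖u y‖ ^ 2) (l • x)) := by
      funext x; rw [hvnorm x]; ring
    rw [this]
    exact (hu2.comp_smul hl.ne').const_mul _
  have hvdmem : MemLp (fun x => fderiv ℝ v x) 2 volume := by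
    refine (memLp_two_iff_integrable_sq_norm
      (measurable_fderiv ℝ v).aestronglyMeasurable).2 ?_
    have : (fun x => ‖fderiv ℝ v x‖ ^ 2)
        = fun x => (t * l) ^ 2 * ((fun y => ‖fderiv ℝ u y‖ ^ 2) (l • x)) := by
      funext x; rw [hvd x]; ring
    rw [this]
    exact (hdu2.comp_smul hl.ne').const_mul _
  clear_value v t l P K M
  refine ⟨v, ⟨hvdiff, hvmem, hvdmem⟩, ?_, ?_⟩
  · rw [hmass, ht2]
    field_simp
  · rw [hkin, hquart]
    have hkin' : (t * l) ^ 2 * ((l ^ 2)⁻¹ * K) = l ^ 2 / M * K := by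
      rw [mul_pow, ht2]
      field_simp
    have hqu' : t ^ 4 * ((l ^ 2)⁻¹ * P) = l ^ 2 / M ^ 2 * P := by
      have h4 : t ^ 4 = (t ^ 2) ^ 2 := by ring
      rw [h4, ht2]
      field_simp
    rw [hkin', hqu']
    have hE : l ^ 2 / M * K + b / 2 * (l ^ 2 / M ^ 2 * P)
        = (l ^ 2 / M ^ 2) * (M * K + b / 2 * P) := by
      field_simp
    rw [hE]
    have h1 : l ^ 2 * (M * K + b / 2 * P) ≤ -(M ^ 2 * (|C| + 1)) := by
      have := (div_le_iff₀ hneg).1 hl2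
      linarith
    have h2 : (l ^ 2 / M ^ 2) * (M * K + b / 2 * P) ≤ -(|C| + 1) := by
      rw [div_mul_eq_mul_div, div_le_iff₀ (by positivity : (0:ℝ) < M ^ 2)]
      linarith
    have h3 := abs_nonneg C
    have h4 := neg_abs_le C
    linarith
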